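/- Let p be a prime and n a positive integer. The Z_p-subspace of Z_p[x_1,...,x_n] consisting of all homogeneous polynomials of degree p-1 is spanned by the set of polynomials { y^(p-1) : y ∈ Z_p^n }, i.e., by the (p-1)-st powers of linear forms. -/

import Mathlib

open Finset MvPolynomial

lemma zmod_sum_pow {p : ℕ} [Fact p.Prime] (a : ℕ) :
    ∑ x : ZMod p, x ^ a = if a ≠ 0 ∧ (p - 1) ∣ a then -1 else 0 := by
  classical
  have hq : Fintype.card (ZMod p) = p := ZMod.card p
  by_cases ha : a = 0
  · subst ha
    simp only [pow_zero, sum_const, card_univ, hq, nsmul_eq_mul, mul_one]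
    simp [ZMod.natCast_self]
  · let φ : (ZMod p)ˣ ↪ ZMod p := ⟨fun x ↦ x, Units.val_injective⟩
    have h0 : univ.map φ = univ \ {0} := by
      ext x
      simp only [mem_map, mem_univ, Function.Embedding.coeFn_mk, true_and, mem_sdiff,
        mem_singleton, φ]
      exact isUnit_iff_ne_zero
    have h1 : ∑ x : ZMod p, x ^ a = ∑ x : (ZMod p)ˣ, (x : ZMod p) ^ a := by
      have := Finset.sum_map univ φ (fun x => x ^ a)
      rw [show (fun x : (ZMod p)ˣ => φ x ^ a) = (fun x : (ZMod p)ˣ => (x : ZMod p) ^ a) from rfl] at this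
      rw [← this, h0,
        Finset.sum_sdiff_eq_sub (Finset.subset_univ _), Finset.sum_singleton,
        zero_pow ha, sub_zero]
    rw [h1, FiniteField.sum_pow_units (ZMod p) a, hq]
    by_cases hd : (p - 1) ∣ a <;> simp [hd, ha]

lemma arith_eq {p n : ℕ} (m k : Fin n → ℕ)
    (hm : ∑ j, m j = p - 1) (hk : ∑ j, k j = p - 1)
    (h : ∀ j, (p - 1 - m j + k j) ≠ 0 ∧ (p - 1) ∣ (p - 1 - m j + k j)) : k = m := by
  have hle : ∀ j, m j ≤ k j := by
    intro j
    have hmj : m j ≤ p - 1 := hm ▸ Finset.single_le_sum (fun i _ => Nat.zero_le (m i)) (mem_univ j)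
    have := Nat.le_of_dvd (Nat.pos_of_ne_zero (h j).1) (h j).2
    omega
  funext j
  exact ((Finset.sum_eq_sum_iff_of_le (fun i _ => hle i)).1 (hm.trans hk.symm) j (mem_univ j)).symm

lemma key_identity {p n : ℕ} [Fact p.Prime] (m : Fin n →₀ ℕ) (hm : ∑ j, m j = p - 1) :
    ∑ y : Fin n → ZMod p,
        (∏ j, y j ^ (p - 1 - m j)) • (∑ j, C (y j) * X j) ^ (p - 1)
      = ((-1 : ZMod p) ^ n * (Nat.multinomial Finset.univ ⇑m : ZMod p)) •
          (monomial m (1 : ZMod p)) := by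
  classical
  set d := p - 1 with hd
  have hd0 : d ≠ 0 := Nat.sub_ne_zero_of_lt (Fact.out : p.Prime).one_lt
  have hmle : ∀ j, m j ≤ d := fun j =>
    hm ▸ Finset.single_le_sum (fun i _ => Nat.zero_le (m i)) (mem_univ j)
  -- expand each power by the multinomial theorem
  have expand : ∀ y : Fin n → ZMod p,
      (∏ j, y j ^ (d - m j)) • (∑ j, C (y j) * X j) ^ d
        = ∑ k ∈ piAntidiag univ d,
            (Nat.multinomial univ k : ZMod p) •
              (C (∏ j, y j ^ (d - m j + k j)) * ∏ j, (X j : MvPolynomial (Fin n) (ZMod p)) ^ k j) := by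
    intro y
    rw [Finset.sum_pow_eq_sum_piAntidiag, Finset.smul_sum]
    refine Finset.sum_congr rfl fun k hk => ?_
    rw [smul_eq_C_mul, smul_eq_C_mul]
    simp only [mul_pow, ← C_pow]
    rw [Finset.prod_mul_distrib, ← map_prod C (fun j => y j ^ k j) univ,
      show ((Nat.multinomial univ k : MvPolynomial (Fin n) (ZMod p))) =
        C ((Nat.multinomial univ k : ZMod p)) from (map_natCast C _).symm]
    simp_rw [pow_add]
    rw [Finset.prod_mul_distrib, map_mul, map_prod, map_prod]
    ring
  rw [Finset.sum_congr rfl fun y _ => expand y, Finset.sum_comm]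
  -- now sum over y inside
  have inner : ∀ k ∈ piAntidiag univ d,
      (∑ y : Fin n → ZMod p,
        (Nat.multinomial univ k : ZMod p) •
          (C (∏ j, y j ^ (d - m j + k j)) * ∏ j, (X j : MvPolynomial (Fin n) (ZMod p)) ^ k j))
      = (Nat.multinomial univ k : ZMod p) •
          (C (∏ j, (if (d - m j + k j) ≠ 0 ∧ d ∣ (d - m j + k j) then (-1 : ZMod p) else 0))
            * ∏ j, (X j : MvPolynomial (Fin n) (ZMod p)) ^ k j) := by
    intro k hk
    rw [← Finset.smul_sum, ← Finset.sum_mul, ← map_sum]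
    congr 3
    rw [show ∑ y : Fin n → ZMod p, ∏ j, y j ^ (d - m j + k j)
        = ∏ j, ∑ t : ZMod p, t ^ (d - m j + k j) from by
      rw [← Fintype.piFinset_univ]
      exact Finset.sum_prod_piFinset univ (fun j t => t ^ (d - m j + k j))]
    exact Finset.prod_congr rfl fun j _ => zmod_sum_pow _
  rw [Finset.sum_congr rfl inner]
  -- all terms vanish except k = ⇑m
  have hmem : ⇑m ∈ piAntidiag univ d := by
    rw [mem_piAntidiag]
    exact ⟨hm, fun i _ => mem_univ i⟩
  rw [Finset.sum_eq_single_of_mem ⇑m hmem]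
  · have hval : ∀ j : Fin n, d - m j + m j = d := fun j => Nat.sub_add_cancel (hmle j)
    have h1 : (∏ j : Fin n, (if (d - m j + m j) ≠ 0 ∧ d ∣ (d - m j + m j) then (-1 : ZMod p) else 0))
        = (-1 : ZMod p) ^ n := by
      rw [Finset.prod_congr rfl fun j _ => ?_, Finset.prod_const, Finset.card_univ,
        Fintype.card_fin]
      rw [hval j, if_pos ⟨hd0, dvd_refl d⟩]
    rw [h1]
    have hmon : (∏ j, (X j : MvPolynomial (Fin n) (ZMod p)) ^ m j) = monomial m 1 := by
      rw [← prod_X_pow_eq_monomial]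
      exact (Finset.prod_subset (Finset.subset_univ _) fun j _ hj => by
        simp [Finsupp.notMem_support_iff.1 hj]).symm
    rw [hmon, smul_eq_C_mul, smul_eq_C_mul, map_mul]
    ring
  · intro k hkmem hkne
    have hzero : (∏ j : Fin n,
        (if (d - m j + k j) ≠ 0 ∧ d ∣ (d - m j + k j) then (-1 : ZMod p) else 0)) = 0 := by
      by_contra hne
      apply hkne
      refine arith_eq (p := p) ⇑m k hm ((mem_piAntidiag.1 hkmem).1) fun j => ?_
      by_contra hj
      exact hne (Finset.prod_eq_zero (mem_univ j) (if_neg hj))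
    rw [hzero, map_zero, zero_mul, smul_zero]

theorem homogeneous_spanned_by_powers_of_linear_forms {p n : ℕ} (hp : p.Prime)
    (hn : 0 < n) :
    homogeneousSubmodule (Fin n) (ZMod p) (p - 1) =
      Submodule.span (ZMod p)
        {P : MvPolynomial (Fin n) (ZMod p) |
          ∃ y : Fin n → ZMod p, P = (∑ j, C (y j) * X j) ^ (p - 1)} := by
  classical
  haveI : Fact p.Prime := ⟨hp⟩
  apply le_antisymm
  · -- homogeneous ≤ span
    intro P hP
    rw [mem_homogeneousSubmodule] at hP
    rw [← P.support_sum_monomial_coeff]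
    apply Submodule.sum_mem
    intro m hm
    -- degree of m
    have hdeg : ∑ j, m j = p - 1 := by
      have h1 := hP (MvPolynomial.mem_support_iff.1 hm)
      rw [show (Finsupp.weight 1 : (Fin n →₀ ℕ) →+ ℕ) = Finsupp.weight (fun _ => 1) from rfl,
        ← Finsupp.degree_eq_weight_one] at h1
      rw [← h1, Finsupp.degree_apply]
      exact (Finset.sum_subset (Finset.subset_univ _) fun j _ hj => by
        simpa using Finsupp.notMem_support_iff.1 hj).symm
    -- reduce to monomial m 1
    have hbase : (monomial m (1 : ZMod p)) ∈ Submodule.span (ZMod p)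
        {P : MvPolynomial (Fin n) (ZMod p) |
          ∃ y : Fin n → ZMod p, P = (∑ j, C (y j) * X j) ^ (p - 1)} := by
      set u : ZMod p := (-1 : ZMod p) ^ n * (Nat.multinomial Finset.univ ⇑m : ZMod p) with hu
      have hu0 : u ≠ 0 := by
        have h2 : ¬ (p ∣ Nat.multinomial Finset.univ ⇑m) := by
          intro hdvd
          have hspec := Nat.multinomial_spec Finset.univ ⇑m
          rw [hdeg] at hspec
          have h3 : Nat.multinomial Finset.univ ⇑m ∣ Nat.factorial (p - 1) :=
            Dvd.intro_left _ hspec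
          have h4 : p ≤ p - 1 := (Nat.Prime.dvd_factorial hp).1 (hdvd.trans h3)
          have h2p := hp.two_le
          omega
        have : ((Nat.multinomial Finset.univ ⇑m : ℕ) : ZMod p) ≠ 0 := by
          rwa [Ne, ZMod.natCast_eq_zero_iff]
        exact mul_ne_zero (pow_ne_zero _ (neg_ne_zero.2 one_ne_zero)) this
      have hk := key_identity m hdeg
      have : (monomial m (1 : ZMod p)) = u⁻¹ • ∑ y : Fin n → ZMod p,
          (∏ j, y j ^ (p - 1 - m j)) • (∑ j, C (y j) * X j) ^ (p - 1) := by
        rw [hk, smul_smul, inv_mul_cancel₀ hu0, one_smul]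
      rw [this]
      refine Submodule.smul_mem _ _ (Submodule.sum_mem _ fun y _ => Submodule.smul_mem _ _ ?_)
      exact Submodule.subset_span ⟨y, rfl⟩
    have : monomial m (coeff m P) = (coeff m P) • monomial m (1 : ZMod p) := by
      rw [smul_monomial, smul_eq_mul, mul_one]
    rw [this]
    exact Submodule.smul_mem _ _ hbase
  · -- span ≤ homogeneous
    rw [Submodule.span_le]
    rintro P ⟨y, rfl⟩
    rw [SetLike.mem_coe, mem_homogeneousSubmodule]
    have hlin : (∑ j, C (y j) * X j : MvPolynomial (Fin n) (ZMod p)).IsHomogeneous 1 :=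
      IsHomogeneous.sum _ _ _ fun j _ => by
        simpa using (isHomogeneous_C _ (y j)).mul (isHomogeneous_X _ j)
    simpa using hlin.pow (p - 1)
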